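/- If G_1 is an [n_1,k,d_1]_q code with Singleton defect s_1 and G_2 is an [n_2,k,d_2]_q code with Singleton defect s_2 (both viewed as projective systems in PG(k−1,q)), then the union multiset G_1 ∪ G_2 is an [n_1+n_2, k, d]_q code with Singleton defect at most k − 1 + s_1 + s_2. Consequently, if s = k−1+s_1+s_2 then m^s(k,q) ≥ m^{s_1}(k,q) + m^{s_2}(k,q). -/

import Mathlib

/-- The number of points (with multiplicity) of the projective system `G`
lying on the hyperplane `ker φ`. -/
noncomputable def hypCount {F : Type*} [Field F] [DecidableEq F] {n k : ℕ}
    (G : Fin n → Fin k → F) (φ : (Fin k → F) →ₗ[F] F) : ℕ :=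
  (Finset.univ.filter fun i => φ (G i) = 0).card

/-- `G` is (the projective system of) a non-degenerate linear `[n,k,d]_q` code:
an `n`-multiset of nonzero points spanning `PG(k-1,q)`, every hyperplane containing
at most `n - d` points, and some hyperplane (a secant) containing exactly `n - d`. -/
def IsCodePS (F : Type*) [Field F] [DecidableEq F] (n k d : ℕ)
    (G : Fin n → Fin k → F) : Prop :=
  0 < d ∧ (∀ i, G i ≠ 0) ∧ Submodule.span F (Set.range G) = ⊤ ∧
  (∀ φ : (Fin k → F) →ₗ[F] F, φ ≠ 0 → hypCount G φ + d ≤ n) ∧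
  (∃ φ : (Fin k → F) →ₗ[F] F, φ ≠ 0 ∧ hypCount G φ + d = n)

/-- `mPar F s k` is `m^s(k,q)`: the maximum length of a non-degenerate
`[n,k,d]_q` code with Singleton defect `s = n - k + 1 - d`. -/
noncomputable def mPar (F : Type*) [Field F] [Fintype F] [DecidableEq F] (s k : ℕ) : ℕ :=
  sSup {n : ℕ | ∃ d : ℕ, ∃ G : Fin n → Fin k → F, IsCodePS F n k d G ∧ d + k + s = n + 1}

section Aux
variable {F : Type*} [Field F] [DecidableEq F]

lemma hypCount_eq_sum {n k : ℕ} (G : Fin n → Fin k → F) (φ : (Fin k → F) →ₗ[F] F) :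
    hypCount G φ = ∑ i, if φ (G i) = 0 then 1 else 0 := by
  rw [hypCount, Finset.card_filter]

lemma hypCount_le {n k : ℕ} (G : Fin n → Fin k → F) (φ : (Fin k → F) →ₗ[F] F) :
    hypCount G φ ≤ n := by
  simpa [hypCount] using Finset.card_filter_le (Finset.univ : Finset (Fin n)) _

lemma hypCount_append {n₁ n₂ k : ℕ} (G₁ : Fin n₁ → Fin k → F) (G₂ : Fin n₂ → Fin k → F)
    (φ : (Fin k → F) →ₗ[F] F) :
    hypCount (Fin.append G₁ G₂) φ = hypCount G₁ φ + hypCount G₂ φ := by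
  rw [hypCount_eq_sum, hypCount_eq_sum, hypCount_eq_sum, Fin.sum_univ_add]
  simp

lemma hypCount_snoc {n k : ℕ} (G : Fin n → Fin k → F) (x : Fin k → F)
    (φ : (Fin k → F) →ₗ[F] F) :
    hypCount (Fin.snoc G x) φ = hypCount G φ + if φ x = 0 then 1 else 0 := by
  rw [hypCount_eq_sum, hypCount_eq_sum, Fin.sum_univ_castSucc]
  simp

lemma exists_ne_zero_mem_ker {k : ℕ} (hk : 2 ≤ k) (φ : (Fin k → F) →ₗ[F] F) :
    ∃ x : Fin k → F, x ≠ 0 ∧ φ x = 0 := by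
  by_contra h
  push_neg at h
  have hinj : Function.Injective φ := by
    rw [← LinearMap.ker_eq_bot, Submodule.eq_bot_iff]
    intro x hx
    by_contra hx0
    exact h x hx0 hx
  have := LinearMap.finrank_le_finrank_of_injective hinj
  simp [Module.finrank_pi, Module.finrank_self] at this
  omega

lemma pad {n k d : ℕ} (hk : 2 ≤ k) {G : Fin n → Fin k → F} (h : IsCodePS F n k d G) :
    ∃ G' : Fin (n + 1) → Fin k → F, IsCodePS F (n + 1) k d G' := by
  obtain ⟨hd, hnz, hspan, hmax, φ₀, hφ₀, hsec⟩ := h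
  obtain ⟨x, hx, hφx⟩ := exists_ne_zero_mem_ker hk φ₀
  refine ⟨Fin.snoc G x, hd, ?_, ?_, ?_, φ₀, hφ₀, ?_⟩
  · intro i
    induction i using Fin.lastCases with
    | last => simpa using hx
    | cast i => simpa using hnz i
  · rw [eq_top_iff, ← hspan]
    apply Submodule.span_mono
    rintro _ ⟨i, rfl⟩
    exact ⟨i.castSucc, by simp⟩
  · intro φ hφ
    have h1 := hmax φ hφ
    rw [hypCount_snoc]
    split_ifs <;> omega
  · rw [hypCount_snoc, if_pos hφx]
    omega

lemma union_code {n₁ n₂ k d₁ d₂ : ℕ} {G₁ : Fin n₁ → Fin k → F} {G₂ : Fin n₂ → Fin k → F}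
    (h₁ : IsCodePS F n₁ k d₁ G₁) (h₂ : IsCodePS F n₂ k d₂ G₂) :
    ∃ d, IsCodePS F (n₁ + n₂) k d (Fin.append G₁ G₂) ∧ d₁ + d₂ ≤ d := by
  obtain ⟨hd₁, hnz₁, hspan₁, hmax₁, φ₁, hφ₁, hsec₁⟩ := h₁
  obtain ⟨hd₂, hnz₂, hspan₂, hmax₂, φ₂, hφ₂, hsec₂⟩ := h₂
  set G := Fin.append G₁ G₂ with hG
  set S : Set ℕ := {m | ∃ φ : (Fin k → F) →ₗ[F] F, φ ≠ 0 ∧ hypCount G φ = m} with hS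
  have hSne : S.Nonempty := ⟨_, φ₁, hφ₁, rfl⟩
  have hSbdd : BddAbove S := by
    refine ⟨n₁ + n₂, ?_⟩
    rintro m ⟨φ, hφ, rfl⟩
    exact hypCount_le G φ
  obtain ⟨φ₀, hφ₀, hMeq⟩ := Nat.sSup_mem hSne hSbdd
  set M := sSup S with hM
  have key : ∀ φ : (Fin k → F) →ₗ[F] F, φ ≠ 0 →
      hypCount G φ = hypCount G₁ φ + hypCount G₂ φ := fun φ _ => hypCount_append G₁ G₂ φ
  have hMb : M + d₁ + d₂ ≤ n₁ + n₂ := by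
    have := hmax₁ φ₀ hφ₀
    have := hmax₂ φ₀ hφ₀
    have := key φ₀ hφ₀
    omega
  refine ⟨n₁ + n₂ - M, ⟨by omega, ?_, ?_, ?_, φ₀, hφ₀, by omega⟩, by omega⟩
  · intro i
    induction i using Fin.addCases with
    | left i => simpa [hG, Fin.append_left] using hnz₁ i
    | right i => simpa [hG, Fin.append_right] using hnz₂ i
  · rw [eq_top_iff, ← hspan₁]
    apply Submodule.span_mono
    rintro _ ⟨i, rfl⟩
    exact ⟨Fin.castAdd n₂ i, by simp [hG, Fin.append_left]⟩
  · intro φ hφ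
    have : hypCount G φ ≤ M := le_csSup hSbdd ⟨φ, hφ, rfl⟩
    omega

end Aux

section AuxF
variable {F : Type*} [Field F] [Fintype F] [DecidableEq F]

lemma code_length_bound {n k d s : ℕ} (hk : 2 ≤ k)
    {G : Fin n → Fin k → F} (h : IsCodePS F n k d G) (e : d + k + s = n + 1) :
    n ≤ (k + s) * Fintype.card F ^ k := by
  by_contra hn
  push_neg at hn
  obtain ⟨hd, hnz, hspan, hmax, -⟩ := h
  have hq : 0 < Fintype.card F ^ k := pow_pos Fintype.card_pos k
  have hcard : (Finset.univ : Finset (Fin k → F)).card * (k + s - 1)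
      < (Finset.univ : Finset (Fin n)).card := by
    have h1 : Fintype.card (Fin k → F) = Fintype.card F ^ k := by
      rw [Fintype.card_fun, Fintype.card_fin]
    have h2 : Fintype.card F ^ k * (k + s - 1) ≤ (k + s) * Fintype.card F ^ k := by
      rw [mul_comm]
      exact Nat.mul_le_mul_right _ (by omega)
    simpa [h1] using lt_of_le_of_lt h2 hn
  obtain ⟨y, -, hy⟩ := Finset.exists_lt_card_fiber_of_mul_lt_card_of_maps_to
    (fun a _ => Finset.mem_univ (G a)) hcard
  have hy0 : y ≠ 0 := by
    have hpos : 0 < (Finset.univ.filter fun i => G i = y).card := by omega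
    obtain ⟨i, hi⟩ := Finset.card_pos.mp hpos
    have := (Finset.mem_filter.mp hi).2
    exact this ▸ hnz i
  obtain ⟨j, hj⟩ : ∃ j, y j ≠ 0 := by
    by_contra hc
    push_neg at hc
    exact hy0 (funext hc)
  obtain ⟨j', hj'⟩ : ∃ j' : Fin k, j' ≠ j :=
    Fintype.exists_ne_of_one_lt_card (by simp; omega) j
  set φ : (Fin k → F) →ₗ[F] F := y j' • LinearMap.proj j - y j • LinearMap.proj j' with hφdef
  have hφy : φ y = 0 := by
    simp [hφdef]
    ring
  have hφ0 : φ ≠ 0 := by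
    intro hc
    have := congrArg (fun ψ : (Fin k → F) →ₗ[F] F => ψ (Pi.single j' 1)) hc
    simp [hφdef, Pi.single_apply, hj'.symm, hj'] at this
    exact hj this
  have hsub : (Finset.univ.filter fun i => G i = y)
      ⊆ (Finset.univ.filter fun i => φ (G i) = 0) := by
    intro i hi
    rw [Finset.mem_filter] at hi ⊢
    exact ⟨hi.1, hi.2 ▸ hφy⟩
  have hcc := Finset.card_le_card hsub
  have hle := hmax φ hφ0
  rw [hypCount] at hle
  omega

omit [Fintype F] in
lemma hypCount_k1 {n : ℕ} {G : Fin n → Fin 1 → F} (hnz : ∀ i, G i ≠ 0)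
    (φ : (Fin 1 → F) →ₗ[F] F) (hφ : φ ≠ 0) : hypCount G φ = 0 := by
  have hx : ∀ x : Fin 1 → F, φ x = x 0 * φ (fun _ => 1) := by
    intro x
    have hx1 : x = x 0 • (fun _ => (1 : F)) := by
      funext j
      fin_cases j
      simp
    conv_lhs => rw [hx1]
    rw [map_smul, smul_eq_mul]
  have h1 : φ (fun _ => (1 : F)) ≠ 0 := by
    intro hc
    apply hφ
    refine LinearMap.ext fun x => ?_
    rw [hx, hc, mul_zero, LinearMap.zero_apply]
  rw [hypCount, Finset.card_eq_zero, Finset.filter_eq_empty_iff]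
  intro i _
  rw [hx]
  refine mul_ne_zero (fun h0 => hnz i (funext fun j => ?_)) h1
  fin_cases j
  exact h0

lemma mPar_zero_one : mPar F 0 1 = 0 := by
  have hub : ¬ BddAbove {n : ℕ | ∃ d : ℕ, ∃ G : Fin n → Fin 1 → F,
      IsCodePS F n 1 d G ∧ d + 1 + 0 = n + 1} := by
    rintro ⟨b, hb⟩
    have hmem : b + 1 ∈ {n : ℕ | ∃ d : ℕ, ∃ G : Fin n → Fin 1 → F,
        IsCodePS F n 1 d G ∧ d + 1 + 0 = n + 1} := by
      refine ⟨b + 1, fun _ _ => 1, ⟨Nat.succ_pos b, ?_, ?_, ?_, ?_⟩, rfl⟩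
      · intro i h
        have := congrFun h 0
        simp at this
      · rw [eq_top_iff]
        rintro x -
        have hx1 : x = x 0 • (fun _ => (1 : F)) := by
          funext j
          fin_cases j
          simp
        rw [hx1]
        exact Submodule.smul_mem _ _ (Submodule.subset_span ⟨⟨0, Nat.succ_pos b⟩, rfl⟩)
      · intro φ hφ
        rw [hypCount_k1 (fun i h => by simpa using congrFun h 0) φ hφ]
        omega
      · refine ⟨LinearMap.proj 0, ?_, ?_⟩
        · intro hc
          have := congrArg (fun ψ : (Fin 1 → F) →ₗ[F] F => ψ (fun _ => 1)) hc
          simp at this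
        · rw [hypCount_k1 (fun i h => by simpa using congrFun h 0) _
            (by intro hc
                have := congrArg (fun ψ : (Fin 1 → F) →ₗ[F] F => ψ (fun _ => 1)) hc
                simp at this)]
          omega
    have := hb hmem
    omega
  rw [mPar, csSup_of_not_bddAbove hub, csSup_empty]
  rfl

end AuxF


/-- The union (as multisets, i.e. the concatenation) of an `[n₁,k,d₁]_q` code of defect
`s₁` and an `[n₂,k,d₂]_q` code of defect `s₂` is an `[n₁+n₂,k,d]_q` code whose Singleton
defect is at most `k - 1 + s₁ + s₂`; consequently, for `s = k - 1 + s₁ + s₂`,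
`m^s(k,q) ≥ m^{s₁}(k,q) + m^{s₂}(k,q)`. -/
theorem union_defect_bound (F : Type*) [Field F] [Fintype F] [DecidableEq F]
    (k n₁ n₂ d₁ d₂ s₁ s₂ : ℕ)
    (G₁ : Fin n₁ → Fin k → F) (G₂ : Fin n₂ → Fin k → F)
    (h₁ : IsCodePS F n₁ k d₁ G₁) (e₁ : d₁ + k + s₁ = n₁ + 1)
    (h₂ : IsCodePS F n₂ k d₂ G₂) (e₂ : d₂ + k + s₂ = n₂ + 1) :
    (∃ d : ℕ, IsCodePS F (n₁ + n₂) k d (Fin.append G₁ G₂) ∧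
      n₁ + n₂ + 2 ≤ d + 2 * k + s₁ + s₂) ∧
    mPar F s₁ k + mPar F s₂ k ≤ mPar F (k - 1 + s₁ + s₂) k := by
  have hk1 : 1 ≤ k := by
    by_contra hk
    have hk0 : k = 0 := by omega
    subst hk0
    obtain ⟨-, -, -, -, φ, hφ, -⟩ := h₁
    apply hφ
    refine LinearMap.ext fun x => ?_
    have hx0 : x = 0 := by
      funext i
      exact i.elim0
    rw [hx0, map_zero, LinearMap.zero_apply]
  obtain ⟨d, hcode, hdd⟩ := union_code h₁ h₂
  refine ⟨⟨d, hcode, by omega⟩, ?_⟩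
  rcases eq_or_lt_of_le hk1 with hk | hk2
  · -- k = 1
    have hk : k = 1 := hk.symm
    subst hk
    have hs₁ : s₁ = 0 := by
      obtain ⟨hd₁, hnz₁, -, -, φ, hφ, hsec⟩ := h₁
      rw [hypCount_k1 hnz₁ φ hφ] at hsec
      omega
    have hs₂ : s₂ = 0 := by
      obtain ⟨hd₂, hnz₂, -, -, φ, hφ, hsec⟩ := h₂
      rw [hypCount_k1 hnz₂ φ hφ] at hsec
      omega
    subst hs₁; subst hs₂
    simp [mPar_zero_one]
  · -- 2 ≤ k
    have hk2 : 2 ≤ k := hk2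
    set s := k - 1 + s₁ + s₂ with hs
    have hbdd : ∀ s' : ℕ, BddAbove {n : ℕ | ∃ d : ℕ, ∃ G : Fin n → Fin k → F,
        IsCodePS F n k d G ∧ d + k + s' = n + 1} := by
      intro s'
      refine ⟨(k + s') * Fintype.card F ^ k, ?_⟩
      rintro n ⟨d, G, hG, he⟩
      exact code_length_bound hk2 hG he
    have hmem1 : mPar F s₁ k ∈ {n : ℕ | ∃ d : ℕ, ∃ G : Fin n → Fin k → F,
        IsCodePS F n k d G ∧ d + k + s₁ = n + 1} := by
      rw [mPar]
      exact Nat.sSup_mem ⟨n₁, d₁, G₁, h₁, e₁⟩ (hbdd s₁)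
    have hmem2 : mPar F s₂ k ∈ {n : ℕ | ∃ d : ℕ, ∃ G : Fin n → Fin k → F,
        IsCodePS F n k d G ∧ d + k + s₂ = n + 1} := by
      rw [mPar]
      exact Nat.sSup_mem ⟨n₂, d₂, G₂, h₂, e₂⟩ (hbdd s₂)
    obtain ⟨D₁, H₁, hH₁, eH₁⟩ := hmem1
    obtain ⟨D₂, H₂, hH₂, eH₂⟩ := hmem2
    obtain ⟨D, hD, hDD⟩ := union_code hH₁ hH₂
    set N := mPar F s₁ k + mPar F s₂ k with hN
    have hpad : ∀ t : ℕ, ∃ G' : Fin (N + t) → Fin k → F, IsCodePS F (N + t) k D G' := by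
      intro t
      induction t with
      | zero => exact ⟨_, hD⟩
      | succ t ih =>
        obtain ⟨G', hG'⟩ := ih
        exact pad hk2 hG'
    have hNle : N + 1 ≤ D + k + s := by omega
    obtain ⟨G', hG'⟩ := hpad (D + k + s - (N + 1))
    have hmemS : N + (D + k + s - (N + 1)) ∈ {n : ℕ | ∃ d : ℕ, ∃ G : Fin n → Fin k → F,
        IsCodePS F n k d G ∧ d + k + s = n + 1} := ⟨D, G', hG', by omega⟩
    calc N ≤ N + (D + k + s - (N + 1)) := Nat.le_add_right _ _
      _ ≤ mPar F s k := le_csSup (hbdd s) hmemS
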